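/- arXiv:1101.2695 — 7 statements merged into one kernel-verified Lean document; each statement's English description precedes it below -/
import Mathlib

section
/- Let l, m, l′, m′ be unit complex numbers. There exists A ∈ SU(2) with A·diag(l, l⁻¹)·A⁻¹ = diag(l′, l′⁻¹) and A·diag(m, m⁻¹)·A⁻¹ = diag(m′, m′⁻¹) if and only if (l′, m′) = (l, m) or (l′, m′) = (l⁻¹, m⁻¹). -/
open Matrix

lemma aux_conj (A D D' : Matrix (Fin 2) (Fin 2) ℂ) (hdet : A.det = 1)
    (h : A * D * A⁻¹ = D') : A * D = D' * A := by
  have hA' : A⁻¹ * A = 1 := Matrix.nonsing_inv_mul A (by simp [hdet])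
  calc A * D = A * D * A⁻¹ * A := by
        rw [Matrix.mul_assoc (A * D), hA', Matrix.mul_one]
    _ = D' * A := by rw [h]

/-- Two pairs of diagonal `SU(2)` matrices `(diag(l,l⁻¹), diag(m,m⁻¹))` and
`(diag(l′,l′⁻¹), diag(m′,m′⁻¹))` are simultaneously conjugate in `SU(2)` if and
only if `(l′,m′) = (l,m)` or `(l′,m′) = (l⁻¹,m⁻¹)`: this is the identification of
characters of `ℤ × ℤ` with the pillowcase. -/
theorem stmt8 (l m l' m' : ℂ) (hl : ‖l‖ = 1) (hm : ‖m‖ = 1)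
    (hl' : ‖l'‖ = 1) (hm' : ‖m'‖ = 1) :
    (∃ A ∈ Matrix.specialUnitaryGroup (Fin 2) ℂ,
        A * Matrix.diagonal ![l, l⁻¹] * A⁻¹ = Matrix.diagonal ![l', l'⁻¹] ∧
        A * Matrix.diagonal ![m, m⁻¹] * A⁻¹ = Matrix.diagonal ![m', m'⁻¹]) ↔
      ((l' = l ∧ m' = m) ∨ (l' = l⁻¹ ∧ m' = m⁻¹)) := by
  have hl0 : l ≠ 0 := by intro h; simp [h] at hl
  have hm0 : m ≠ 0 := by intro h; simp [h] at hm
  constructor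
  · rintro ⟨A, hA, h1, h2⟩
    rw [Matrix.mem_specialUnitaryGroup_iff] at hA
    have e1 := aux_conj A _ _ hA.2 h1
    have e2 := aux_conj A _ _ hA.2 h2
    have E : ∀ (x x' : ℂ), A * Matrix.diagonal ![x, x⁻¹] = Matrix.diagonal ![x', x'⁻¹] * A →
        ∀ i j : Fin 2, A i j * (![x, x⁻¹] j) = (![x', x'⁻¹] i) * A i j := by
      intro x x' h i j
      have := congrFun (congrFun h i) j
      simpa [Matrix.mul_diagonal, Matrix.diagonal_mul] using this
    by_cases ha : A 0 0 = 0
    · right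
      have hdet := hA.2
      rw [Matrix.det_fin_two, ha] at hdet
      have hb : A 0 1 ≠ 0 := by intro h; rw [h] at hdet; simp at hdet
      have hc : A 1 0 ≠ 0 := by intro h; rw [h] at hdet; simp at hdet
      have k1 := E l l' e1 0 1
      have k2 := E m m' e2 0 1
      simp only [Matrix.cons_val_zero, Matrix.cons_val_one, Matrix.head_cons] at k1 k2
      rw [mul_comm (A 0 1)] at k1 k2
      exact ⟨(mul_right_cancel₀ hb k1).symm, (mul_right_cancel₀ hb k2).symm⟩
    · left
      have k1 := E l l' e1 0 0
      have k2 := E m m' e2 0 0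
      simp only [Matrix.cons_val_zero, Matrix.cons_val_one, Matrix.head_cons] at k1 k2
      rw [mul_comm (A 0 0)] at k1 k2
      exact ⟨(mul_right_cancel₀ ha k1).symm, (mul_right_cancel₀ ha k2).symm⟩
  · rintro (⟨rfl, rfl⟩ | ⟨rfl, rfl⟩)
    · exact ⟨1, Submonoid.one_mem _, by simp, by simp⟩
    · set A : Matrix (Fin 2) (Fin 2) ℂ := !![0, 1; -1, 0] with hAdef
      have hinv : A⁻¹ = !![0, -1; 1, 0] := by
        apply Matrix.inv_eq_right_inv
        ext i j
        fin_cases i <;> fin_cases j <;>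
          simp [hAdef, Matrix.mul_apply, Fin.sum_univ_two]
      refine ⟨A, ?_, ?_, ?_⟩
      · rw [Matrix.mem_specialUnitaryGroup_iff]
        constructor
        · rw [Matrix.mem_unitaryGroup_iff]
          ext i j
          fin_cases i <;> fin_cases j <;>
           simp [hAdef, Matrix.mul_apply, Fin.sum_univ_two, Matrix.star_apply]
        · simp [hAdef, Matrix.det_fin_two]
      · rw [hinv]
        ext i j
        fin_cases i <;> fin_cases j <;>
          simp [hAdef, Matrix.mul_apply, Fin.sum_univ_two, Matrix.diagonal_apply, Matrix.vecHead, Matrix.vecTail, Matrix.vecMul, dotProduct]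
      · rw [hinv]
        ext i j
        fin_cases i <;> fin_cases j <;>
          simp [hAdef, Matrix.mul_apply, Fin.sum_univ_two, Matrix.diagonal_apply, Matrix.vecHead, Matrix.vecTail, Matrix.vecMul, dotProduct]
end

section
/- Let l, m be complex numbers of modulus 1 with m¹² ≠ 1. Then l + l⁻¹ + m⁶ + m⁻⁶ = 0 and l·m + l⁻¹·m⁻¹ + m⁵ + m⁻⁵ = 0 hold simultaneously if and only if l = −m⁻⁶. -/
/-- For unit complex numbers `l, m` with `m¹² ≠ 1`, the two generators of the
`A`-ideal of the trefoil vanish simultaneously if and only if the `A`-polynomial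
relation `l = −m⁻⁶` holds. -/
theorem stmt10 (l m : ℂ) (hl : ‖l‖ = 1) (hm : ‖m‖ = 1) (h12 : m ^ 12 ≠ 1) :
    (l + l⁻¹ + m ^ 6 + (m ^ 6)⁻¹ = 0 ∧
      l * m + l⁻¹ * m⁻¹ + m ^ 5 + (m ^ 5)⁻¹ = 0) ↔ l = -(m ^ 6)⁻¹ := by
  have hl0 : l ≠ 0 := by intro h; simp [h] at hl
  have hm0 : m ≠ 0 := by intro h; simp [h] at hm
  have hm6 : m ^ 6 ≠ 0 := pow_ne_zero _ hm0
  have hm5 : m ^ 5 ≠ 0 := pow_ne_zero _ hm0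
  constructor
  · rintro ⟨h1, h2⟩
    field_simp at h1 h2
    have hfac : (l + m ^ 6) * (l * m ^ 6 + 1) = 0 := by linear_combination h1
    rcases mul_eq_zero.1 hfac with h | h
    · have hl' : l = -m ^ 6 := by linear_combination h
      rw [hl'] at h2
      have hfac2 : m ^ 5 * ((m ^ 12 - 1) * (m ^ 2 - 1)) = 0 := by linear_combination m * h2
      have hfac2' := (mul_eq_zero.1 hfac2).resolve_left hm5
      rcases mul_eq_zero.1 hfac2' with h' | h'
      · exact absurd (by linear_combination h') h12
      · have hq : m ^ 2 = 1 := by linear_combination h'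
        exact absurd (by rw [show (12:ℕ) = 2 * 6 by norm_num, pow_mul, hq, one_pow]) h12
    · field_simp
      linear_combination h
  · intro h
    subst h
    constructor
    · simp only [inv_neg, inv_inv]; ring
    · simp only [inv_neg, inv_inv]; field_simp; ring
end

section
/- Let X, Y ∈ SU(2) (2 × 2 special unitary matrices over ℂ) satisfy X² = Y³. If there is no nonzero vector v ∈ ℂ² that is simultaneously an eigenvector of X and of Y, then X² = Y³ = −I, the negative of the identity matrix. -/
open Module

lemma exists_eigvec (M : Matrix (Fin 2) (Fin 2) ℂ) :
    ∃ v : Fin 2 → ℂ, v ≠ 0 ∧ ∃ b : ℂ, M.mulVec v = b • v := by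
  obtain ⟨c, hc⟩ := Module.End.exists_eigenvalue M.mulVecLin
  obtain ⟨v, hv⟩ := hc.exists_hasEigenvector
  refine ⟨v, hv.2, c, ?_⟩
  have := hv.apply_eq_smul
  simpa [Matrix.mulVecLin_apply] using this

lemma eig_of_commute (Z W : Matrix (Fin 2) (Fin 2) ℂ) (c : ℂ) (v : Fin 2 → ℂ)
    (hv : v ≠ 0) (hZv : Z.mulVec v = c • v) (hcom : Z * W = W * Z)
    (hZ : Z ≠ c • 1) : ∃ a : ℂ, W.mulVec v = a • v := by
  set E := Module.End.eigenspace Z.mulVecLin c with hE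
  have hvE : v ∈ E := by
    rw [hE, Module.End.mem_eigenspace_iff, Matrix.mulVecLin_apply, hZv]
  have hspan : (ℂ ∙ v) ≤ E := (Submodule.span_singleton_le_iff_mem v E).2 hvE
  have hEtop : E ≠ ⊤ := by
    intro htop
    apply hZ
    ext i j
    have hw : Z.mulVec (Pi.single j 1 : Fin 2 → ℂ) = c • (Pi.single j 1 : Fin 2 → ℂ) := by
      have : (Pi.single j 1 : Fin 2 → ℂ) ∈ E := htop ▸ Submodule.mem_top
      rw [hE, Module.End.mem_eigenspace_iff, Matrix.mulVecLin_apply] at this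
      exact this
    have := congrFun hw i
    simpa [Matrix.mulVec_single, Matrix.smul_apply, Matrix.one_apply, Pi.single_apply,
      mul_comm] using this
  have hfin : Module.finrank ℂ E ≤ 1 := by
    have h2 : Module.finrank ℂ (Fin 2 → ℂ) = 2 := by simp
    have := Submodule.finrank_lt hEtop (K := ℂ) (V := Fin 2 → ℂ)
    omega
  have hsp1 : Module.finrank ℂ (ℂ ∙ v) = 1 := finrank_span_singleton hv
  have hEeq : (ℂ ∙ v) = E := Submodule.eq_of_le_of_finrank_le hspan (by omega)
  have hWv : W.mulVec v ∈ E := by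
    rw [hE, Module.End.mem_eigenspace_iff, Matrix.mulVecLin_apply, Matrix.mulVec_mulVec,
      hcom, ← Matrix.mulVec_mulVec, hZv, Matrix.mulVec_smul]
  rw [← hEeq, Submodule.mem_span_singleton] at hWv
  obtain ⟨a, ha⟩ := hWv
  exact ⟨a, ha.symm⟩

lemma ch2 (X : Matrix (Fin 2) (Fin 2) ℂ) :
    X ^ 2 = X.trace • X - X.det • 1 := by
  ext i j
  fin_cases i <;> fin_cases j <;>
    simp [pow_two, Matrix.mul_apply, Fin.sum_univ_two, Matrix.trace_fin_two,
      Matrix.det_fin_two, Matrix.one_apply] <;> ring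

/-- If `X, Y ∈ SU(2)` satisfy `X² = Y³` and have no common eigenvector in `ℂ²`
(i.e. the corresponding representation of the trefoil group is irreducible), then
`X² = Y³ = −I`. -/
theorem stmt12 (X Y : Matrix (Fin 2) (Fin 2) ℂ)
    (hX : X ∈ Matrix.specialUnitaryGroup (Fin 2) ℂ)
    (hY : Y ∈ Matrix.specialUnitaryGroup (Fin 2) ℂ)
    (h : X ^ 2 = Y ^ 3)
    (hirr : ¬ ∃ v : Fin 2 → ℂ, v ≠ 0 ∧
      (∃ a : ℂ, X.mulVec v = a • v) ∧ (∃ b : ℂ, Y.mulVec v = b • v)) :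
    X ^ 2 = -1 ∧ Y ^ 3 = -1 := by
  have hdX : X.det = 1 := hX.2
  obtain ⟨v, hv0, c, hZv⟩ := exists_eigvec (X ^ 2)
  by_cases hsc : X ^ 2 = c • (1 : Matrix (Fin 2) (Fin 2) ℂ)
  · -- Z is scalar; c^2 = 1
    have hc2 : c ^ 2 = 1 := by
      have hd : (X ^ 2).det = 1 := by rw [Matrix.det_pow, hdX, one_pow]
      rw [hsc] at hd
      simpa [Matrix.det_smul] using hd
    have hc : c = 1 ∨ c = -1 := by
      have : (c - 1) * (c + 1) = 0 := by ring_nf; linear_combination hc2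
      rcases mul_eq_zero.1 this with h' | h'
      · left; exact sub_eq_zero.1 h'
      · right; exact eq_neg_of_add_eq_zero_left h'
    rcases hc with rfl | rfl
    · -- c = 1 : X^2 = 1, show X scalar, contradiction
      exfalso
      rw [one_smul] at hsc
      have hch := ch2 X
      rw [hsc, hdX, one_smul] at hch
      -- 1 = trace X • X - 1
      have htX : X.trace • X = (2 : ℂ) • (1 : Matrix (Fin 2) (Fin 2) ℂ) := by
        have h1 : X.trace • X = 1 + 1 := eq_add_of_sub_eq hch.symm
        rw [h1, two_smul]
      have ht0 : X.trace ≠ 0 := by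
        intro h0
        rw [h0, zero_smul] at htX
        have := congrFun (congrFun htX 0) 0
        simp [Matrix.smul_apply, Matrix.one_apply] at this
      have hXs : X = (2 / X.trace) • (1 : Matrix (Fin 2) (Fin 2) ℂ) := by
        have := congrArg (fun M => (X.trace)⁻¹ • M) htX
        simpa [smul_smul, inv_mul_cancel₀ ht0, div_eq_mul_inv, mul_comm] using this
      obtain ⟨w, hw0, b, hYw⟩ := exists_eigvec Y
      refine hirr ⟨w, hw0, ⟨2 / X.trace, ?_⟩, ⟨b, hYw⟩⟩
      nth_rewrite 1 [hXs]
      rw [Matrix.smul_mulVec, Matrix.one_mulVec]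
    · constructor
      · rw [hsc]; simp
      · rw [← h, hsc]; simp
  · exfalso
    have ha : ∃ a : ℂ, X.mulVec v = a • v :=
      eig_of_commute (X ^ 2) X c v hv0 hZv (by rw [← pow_succ, pow_succ']) hsc
    have hb : ∃ b : ℂ, Y.mulVec v = b • v := by
      refine eig_of_commute (X ^ 2) Y c v hv0 hZv ?_ hsc
      rw [h, ← pow_succ, pow_succ']
    exact hirr ⟨v, hv0, ha, hb⟩
end

section
/- For unit quaternions A, B and parameters s, t ∈ (0, π), define β(A, t) = (A i A⁻¹, A(cos(π/3) + sin(π/3)(cos(t) i + sin(t) j))A⁻¹). Then β(A, t) = β(B, s) if and only if t = s and B = A or B = −A. -/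
open Real
open scoped Quaternion

/-- The quaternion `i`. -/
def quatI : ℍ[ℝ] := ⟨0, 1, 0, 0⟩

/-- The quaternion `cos(π/3) + sin(π/3)(cos(t) i + sin(t) j)`. -/
noncomputable def quatY (t : ℝ) : ℍ[ℝ] :=
  ⟨Real.cos (π / 3), Real.sin (π / 3) * Real.cos t, Real.sin (π / 3) * Real.sin t, 0⟩

set_option maxHeartbeats 1000000 in
/-- The parametrization `β(A,t) = (A i A⁻¹, A(cos(π/3)+sin(π/3)(cos t i + sin t j))A⁻¹)`
of the irreducible representations of the trefoil group is exactly two-to-one: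
`β(A,t) = β(B,s)` iff `t = s` and `B = ±A`. -/
theorem stmt13 (A B : ℍ[ℝ]) (hA : ‖A‖ = 1) (hB : ‖B‖ = 1)
    (t s : ℝ) (ht : t ∈ Set.Ioo 0 π) (hs : s ∈ Set.Ioo 0 π) :
    (A * quatI * A⁻¹ = B * quatI * B⁻¹ ∧ A * quatY t * A⁻¹ = B * quatY s * B⁻¹) ↔
      (t = s ∧ (B = A ∨ B = -A)) := by
  have hA0 : A ≠ 0 := by intro h; rw [h] at hA; simp at hA
  have hB0 : B ≠ 0 := by intro h; rw [h] at hB; simp at hB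
  constructor
  · rintro ⟨h1, h2⟩
    set C : ℍ[ℝ] := B⁻¹ * A with hCdef
    have e1 : C * quatI = quatI * C := by
      have h : B⁻¹ * (A * quatI * A⁻¹) * A = B⁻¹ * (B * quatI * B⁻¹) * A := by rw [h1]
      simpa [hCdef, mul_assoc, inv_mul_cancel₀ hA0, inv_mul_cancel_left₀ hB0] using h
    have e2 : C * quatY t = quatY s * C := by
      have h : B⁻¹ * (A * quatY t * A⁻¹) * A = B⁻¹ * (B * quatY s * B⁻¹) * A := by rw [h2]
      simpa [hCdef, mul_assoc, inv_mul_cancel₀ hA0, inv_mul_cancel_left₀ hB0] using h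
    have hCnorm : ‖C‖ = 1 := by
      rw [hCdef, norm_mul, norm_inv, hA, hB]; norm_num
    have hCsq : C.re ^ 2 + C.imI ^ 2 + C.imJ ^ 2 + C.imK ^ 2 = 1 := by
      have h := Quaternion.normSq_eq_norm_mul_self C
      rw [hCnorm, Quaternion.normSq_def'] at h
      linarith
    rw [Quaternion.ext_iff] at e1
    obtain ⟨g1, g2, g3, g4⟩ := e1
    simp only [Quaternion.imJ_mul, Quaternion.imK_mul, Quaternion.re_mul, Quaternion.imI_mul] at g3 g4
    simp only [quatI] at g3 g4
    have hJ0 : C.imJ = 0 := by linarith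
    have hK0 : C.imK = 0 := by linarith
    have hsin3 : Real.sin (π / 3) > 0 := by
      rw [Real.sin_pi_div_three]; positivity
    have hsint : Real.sin t > 0 := Real.sin_pos_of_pos_of_lt_pi ht.1 ht.2
    have hsins : Real.sin s > 0 := Real.sin_pos_of_pos_of_lt_pi hs.1 hs.2
    rw [Quaternion.ext_iff] at e2
    obtain ⟨f1, f2, f3, f4⟩ := e2
    simp only [Quaternion.re_mul, Quaternion.imI_mul, Quaternion.imJ_mul, Quaternion.imK_mul,
      hJ0, hK0] at f1 f2 f3 f4
    simp only [quatY] at f1 f2 f3 f4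
    have hCsq' : C.re ^ 2 + C.imI ^ 2 = 1 := by rw [hJ0, hK0] at hCsq; linarith
    have ha' : Real.sin (π/3) * (C.imI * (Real.cos t - Real.cos s)) = 0 := by
      linear_combination -f1
    have hb' : Real.sin (π/3) * (C.re * (Real.cos t - Real.cos s)) = 0 := by
      linear_combination f2
    have ha2 : C.imI * (Real.cos t - Real.cos s) = 0 := by
      rcases mul_eq_zero.mp ha' with h | h
      · linarith
      · exact h
    have hb2 : C.re * (Real.cos t - Real.cos s) = 0 := by
      rcases mul_eq_zero.mp hb' with h | h
      · linarith
      · exact h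
    have hcos : Real.cos t = Real.cos s := by
      have : Real.cos t - Real.cos s = 0 := by
        linear_combination C.re * hb2 + C.imI * ha2 - (Real.cos t - Real.cos s) * hCsq'
      linarith
    have hts : t = s := Real.injOn_cos ⟨le_of_lt ht.1, le_of_lt ht.2⟩
      ⟨le_of_lt hs.1, le_of_lt hs.2⟩ hcos
    subst hts
    have hprod : Real.sin (π/3) * Real.sin t * C.imI = 0 := by linear_combination f4 / 2
    have hb : C.imI = 0 := by
      rcases mul_eq_zero.mp hprod with h | h
      · rcases mul_eq_zero.mp h with h' | h' <;> linarith
      · exact h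
    have ha : C.re = 1 ∨ C.re = -1 := by
      have h0 : (C.re - 1) * (C.re + 1) = 0 := by nlinarith [hCsq]
      rcases mul_eq_zero.mp h0 with h | h
      · left; linarith
      · right; linarith
    refine ⟨rfl, ?_⟩
    rcases ha with h | h
    · left
      have hC1 : B⁻¹ * A = 1 := by
        rw [← hCdef]; apply Quaternion.ext <;> simp [h, hb, hJ0, hK0]
      exact (inv_mul_eq_one₀ hB0).mp hC1
    · right
      have hC1 : B⁻¹ * A = -1 := by
        rw [← hCdef]; apply Quaternion.ext <;> simp [h, hb, hJ0, hK0]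
      have hAB : A = -B := by
        have := congrArg (fun z => B * z) hC1
        simpa [← mul_assoc, mul_inv_cancel₀ hB0] using this
      rw [hAB, neg_neg]
  · rintro ⟨rfl, hBA | hBA⟩
    · subst hBA; exact ⟨rfl, rfl⟩
    · subst hBA
      constructor <;> simp [neg_mul, mul_neg, inv_neg]
end

section
/- Let p and q be pure unit quaternions (purely imaginary quaternions of norm 1). Then there exist a unit quaternion A and t ∈ [0, π] such that A i A⁻¹ = p and A(cos(t) i + sin(t) j)A⁻¹ = q. -/
open Real
open scoped Quaternion

/-- The pure quaternion `cos t · i + sin t · j`. -/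
noncomputable def quatIJ (t : ℝ) : ℍ[ℝ] := ⟨0, Real.cos t, Real.sin t, 0⟩

lemma conj_eq_of (A x y : ℍ[ℝ]) (hA : A ≠ 0) (h : A * x = y * A) :
    A * x * A⁻¹ = y := by
  rw [h, mul_assoc, mul_inv_cancel₀ hA, mul_one]

lemma re_mul_comm (x y : ℍ[ℝ]) : (x * y).re = (y * x).re := by
  simp [Quaternion.re_mul]; ring

lemma normSq_of (x : ℍ[ℝ]) (h : ‖x‖ = 1) :
    x.re^2 + x.imI^2 + x.imJ^2 + x.imK^2 = 1 := by
  have h2 : Quaternion.normSq x = 1 := by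
    rw [Quaternion.normSq_eq_norm_mul_self, h, mul_one]
  rw [Quaternion.normSq_def'] at h2
  nlinarith [h2]

def mkQ (a b c d : ℝ) : ℍ[ℝ] := ⟨a, b, c, d⟩

lemma stepB (c d e s : ℝ) (hs2 : s^2 = d^2 + e^2) (hz : ¬(e = 0 ∧ s - d = 0)) :
    ∃ B : ℍ[ℝ], B ≠ 0 ∧ B * quatI = quatI * B ∧
      B * mkQ 0 c s 0 = mkQ 0 c d e * B := by
  refine ⟨mkQ e (s - d) 0 0, ?_, ?_, ?_⟩
  · intro h
    rw [Quaternion.ext_iff] at h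
    exact hz ⟨h.1, h.2.1⟩
  · ext <;> simp [Quaternion.re_mul, Quaternion.imI_mul,
      Quaternion.imJ_mul, Quaternion.imK_mul] <;> simp [mkQ, quatI] <;> ring
  · ext <;> simp [Quaternion.re_mul, Quaternion.imI_mul,
      Quaternion.imJ_mul, Quaternion.imK_mul] <;> simp [mkQ] <;> nlinarith [hs2]

lemma stepA (p : ℍ[ℝ]) (hp0 : p.re = 0) (hp : ‖p‖ = 1) :
    ∃ A₁ : ℍ[ℝ], A₁ ≠ 0 ∧ A₁ * quatI = p * A₁ := by
  have hpn := normSq_of p hp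
  rw [hp0] at hpn
  by_cases hpi : p = -quatI
  · refine ⟨⟨0,0,1,0⟩, ?_, ?_⟩
    · intro h
      have := congrArg QuaternionAlgebra.imJ h
      simp at this
    · subst hpi
      change (⟨0,0,1,0⟩ : ℍ[ℝ,-1,0,-1]) * ⟨0,1,0,0⟩ = -⟨0,1,0,0⟩ * ⟨0,0,1,0⟩
      ext <;> simp
  · refine ⟨1 - p * quatI, ?_, ?_⟩
    · intro h
      have h1 : (1 - p * quatI).re = 0 := by rw [h]; simp
      simp [Quaternion.re_mul, hp0] at h1; simp [quatI] at h1
      have hJ : p.imJ = 0 := by nlinarith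
      have hK : p.imK = 0 := by nlinarith
      apply hpi
      ext <;> simp [hp0, hJ, hK, Quaternion.re_neg, Quaternion.imI_neg, Quaternion.imJ_neg, Quaternion.imK_neg] <;> simp [quatI] <;> nlinarith
    · ext <;> simp [Quaternion.re_mul, Quaternion.imI_mul,
        Quaternion.imJ_mul, Quaternion.imK_mul, hp0] <;> simp [quatI] <;> nlinarith

/-- For any two pure unit quaternions `p` and `q`, there are a unit quaternion `A`
and `t ∈ [0, π]` with `A i A⁻¹ = p` and `A(cos t · i + sin t · j)A⁻¹ = q`. -/
theorem stmt14 (p q : ℍ[ℝ]) (hp0 : p.re = 0) (hp : ‖p‖ = 1)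
    (hq0 : q.re = 0) (hq : ‖q‖ = 1) :
    ∃ A : ℍ[ℝ], ‖A‖ = 1 ∧ ∃ t ∈ Set.Icc (0 : ℝ) π,
      A * quatI * A⁻¹ = p ∧ A * quatIJ t * A⁻¹ = q := by
  obtain ⟨A₁, hA₁0, hA₁⟩ := stepA p hp0 hp
  set q' : ℍ[ℝ] := A₁⁻¹ * q * A₁ with hq'def
  have hq'0 : q'.re = 0 := by
    have h := re_mul_comm (A₁⁻¹ * q) A₁
    rw [hq'def, h, ← mul_assoc, mul_inv_cancel₀ hA₁0, one_mul, hq0]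
  have hq'n : ‖q'‖ = 1 := by
    rw [hq'def, norm_mul, norm_mul, norm_inv, hq]
    field_simp [norm_ne_zero_iff.2 hA₁0]
  have hq'sq := normSq_of q' hq'n
  rw [hq'0] at hq'sq
  set c := q'.imI with hc
  set d := q'.imJ with hd
  set e := q'.imK with he
  have hc1 : -1 ≤ c := by nlinarith
  have hc2 : c ≤ 1 := by nlinarith
  set t := Real.arccos c with ht
  have hct : Real.cos t = c := Real.cos_arccos hc1 hc2
  have htmem : t ∈ Set.Icc (0:ℝ) π := ⟨Real.arccos_nonneg c, Real.arccos_le_pi c⟩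
  have hst : Real.sin t ≥ 0 := Real.sin_nonneg_of_mem_Icc htmem
  set s := Real.sin t with hs
  have hst2 : s ^ 2 = d^2 + e^2 := by
    have h := Real.sin_sq_add_cos_sq t
    rw [hct, ← hs] at h; nlinarith
  have hq'mk : q' = mkQ 0 c d e := by
    ext <;> simp [mkQ, hq'0, ← hc, ← hd, ← he]
  have hIJmk : quatIJ t = mkQ 0 c s 0 := by
    ext <;> simp [mkQ, quatIJ, hct, ← hs]
  obtain ⟨B, hB0, hBi, hBt⟩ : ∃ B : ℍ[ℝ], B ≠ 0 ∧ B * quatI = quatI * B ∧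
      B * quatIJ t = q' * B := by
    by_cases hz : e = 0 ∧ s - d = 0
    · refine ⟨1, one_ne_zero, by rw [one_mul, mul_one], ?_⟩
      rw [one_mul, mul_one, hq'mk, hIJmk]
      have h1 : s = d := by linarith [hz.2]
      rw [hz.1, h1]
    · obtain ⟨B, h1, h2, h3⟩ := stepB c d e s hst2 hz
      exact ⟨B, h1, h2, by rw [hq'mk, hIJmk]; exact h3⟩
  set A : ℍ[ℝ] := A₁ * B with hA
  have hA0 : A ≠ 0 := mul_ne_zero hA₁0 hB0
  have h1 : A * quatI = p * A := by
    rw [hA, mul_assoc, hBi, ← mul_assoc, hA₁, mul_assoc]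
  have h2 : A * quatIJ t = q * A := by
    have hkey : A₁ * q' = q * A₁ := by
      rw [hq'def, ← mul_assoc, ← mul_assoc, mul_inv_cancel₀ hA₁0, one_mul]
    rw [hA, mul_assoc, hBt, ← mul_assoc, hkey, mul_assoc]
  have hr : (‖A‖⁻¹ : ℝ) ≠ 0 := inv_ne_zero (norm_ne_zero_iff.2 hA0)
  have hA'0 : (‖A‖⁻¹ • A : ℍ[ℝ]) ≠ 0 := smul_ne_zero hr hA0
  refine ⟨‖A‖⁻¹ • A, ?_, t, htmem, ?_, ?_⟩
  · rw [norm_smul, norm_inv, norm_norm, inv_mul_cancel₀ (norm_ne_zero_iff.2 hA0)]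
  · exact conj_eq_of _ _ _ hA'0 (by rw [smul_mul_assoc, h1, mul_smul_comm])
  · exact conj_eq_of _ _ _ hA'0 (by rw [smul_mul_assoc, h2, mul_smul_comm])
end

section
/- The total Dubois torsion of the trefoil knot equals 4π/3; concretely, ∫₀^π (2 sin(π/3) sin(t)) / √(cos²(π/3) + sin²(π/3) sin²(t)) dt = 4π/3. -/
open Real

lemma stmt17_key (t : ℝ) :
    Real.cos (π / 3) ^ 2 + Real.sin (π / 3) ^ 2 * Real.sin t ^ 2
      = 1 - (Real.sqrt 3 / 2 * Real.cos t) ^ 2 := by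
  have h := Real.sin_sq_add_cos_sq t
  rw [Real.sin_pi_div_three, Real.cos_pi_div_three]
  nlinarith [Real.sq_sqrt (by norm_num : (0:ℝ) ≤ 3)]

lemma stmt17_pos (t : ℝ) : (0:ℝ) < 1 - (Real.sqrt 3 / 2 * Real.cos t) ^ 2 := by
  have h1 : Real.cos t ^ 2 ≤ 1 := Real.cos_sq_le_one t
  nlinarith [Real.sq_sqrt (by norm_num : (0:ℝ) ≤ 3), Real.sqrt_nonneg 3]

lemma stmt17_deriv (t : ℝ) :
    HasDerivAt (fun u => -2 * Real.arcsin (Real.sqrt 3 / 2 * Real.cos u))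
      (2 * Real.sin (π / 3) * Real.sin t /
        Real.sqrt (Real.cos (π / 3) ^ 2 + Real.sin (π / 3) ^ 2 * Real.sin t ^ 2)) t := by
  have hpos := stmt17_pos t
  have h1 : Real.sqrt 3 / 2 * Real.cos t ≠ -1 := by
    intro h; rw [h] at hpos; norm_num at hpos
  have h2 : Real.sqrt 3 / 2 * Real.cos t ≠ 1 := by
    intro h; rw [h] at hpos; norm_num at hpos
  have ha := Real.hasDerivAt_arcsin h1 h2
  have hg : HasDerivAt (fun u => Real.sqrt 3 / 2 * Real.cos u)
      (Real.sqrt 3 / 2 * (-Real.sin t)) t := (Real.hasDerivAt_cos t).const_mul _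
  have := (ha.comp t hg).const_mul (-2 : ℝ)
  refine this.congr_deriv ?_
  rw [stmt17_key, Real.sin_pi_div_three]
  have hs : Real.sqrt (1 - (Real.sqrt 3 / 2 * Real.cos t) ^ 2) ≠ 0 :=
    ne_of_gt (Real.sqrt_pos.mpr hpos)
  field_simp

lemma stmt17_cont :
    Continuous fun t : ℝ =>
      2 * Real.sin (π / 3) * Real.sin t /
        Real.sqrt (Real.cos (π / 3) ^ 2 + Real.sin (π / 3) ^ 2 * Real.sin t ^ 2) := by
  apply Continuous.div
  · fun_prop
  · fun_prop
  · intro t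
    refine ne_of_gt (Real.sqrt_pos.mpr ?_)
    rw [stmt17_key]; exact stmt17_pos t

/-- The total Dubois torsion of the trefoil knot equals `4π/3`. -/
theorem stmt17 :
    ∫ t in (0 : ℝ)..π,
      (2 * Real.sin (π / 3) * Real.sin t) /
        Real.sqrt (Real.cos (π / 3) ^ 2 + Real.sin (π / 3) ^ 2 * Real.sin t ^ 2)
      = 4 * π / 3 := by
  rw [intervalIntegral.integral_eq_sub_of_hasDerivAt (fun t _ => stmt17_deriv t)
    (stmt17_cont.intervalIntegrable 0 π)]
  have harc : Real.arcsin (Real.sqrt 3 / 2) = π / 3 := by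
    rw [← Real.sin_pi_div_three]
    exact Real.arcsin_sin (by linarith [Real.pi_pos]) (by linarith [Real.pi_pos])
  rw [Real.cos_pi, Real.cos_zero]
  have : Real.sqrt 3 / 2 * (-1 : ℝ) = -(Real.sqrt 3 / 2) := by ring
  rw [this, Real.arcsin_neg, mul_one, harc]
  ring
end

section
/- For every t ∈ ℝ and all real numbers a₁, …, a₆, the 6 × 6 real matrix with rows (0, 0, 0, 0, 1, 0), (0, −2, 0, 0, 0, 0), (0, 0, −2, 0, 0, 0), (−3/2 + (3/2)cos²(t), a₁, a₂, −(√3/4) sin(t), 0, cos(t)), ((3/2) sin(t) cos(t), a₃, a₄, (√3/4) cos(t), 0, sin(t)), (−(√3/2) sin(t), a₅, a₆, 3/4, 0, 0) has determinant of absolute value 6·|sin(t)|; in particular the determinant does not depend on a₁, …, a₆. -/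
open Real

set_option maxRecDepth 20000 in
set_option maxHeartbeats 2000000 in
/-- The change-of-basis matrix arising in the Dubois torsion computation for the
trefoil knot has determinant of absolute value `6|sin t|`, independently of the
unspecified (starred) entries `a₁, …, a₆`. -/
theorem stmt18 (t a₁ a₂ a₃ a₄ a₅ a₆ : ℝ) :
    |(Matrix.det
      !![0, 0, 0, 0, 1, 0;
         0, -2, 0, 0, 0, 0;
         0, 0, -2, 0, 0, 0;
         -3/2 + 3/2 * Real.cos t ^ 2, a₁, a₂, -(Real.sqrt 3 / 4) * Real.sin t, 0, Real.cos t;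
         3/2 * Real.sin t * Real.cos t, a₃, a₄, (Real.sqrt 3 / 4) * Real.cos t, 0, Real.sin t;
         -(Real.sqrt 3 / 2) * Real.sin t, a₅, a₆, 3/4, 0, 0])| = 6 * |Real.sin t| := by
  have hd : (Matrix.det
      !![0, 0, 0, 0, 1, 0;
         0, -2, 0, 0, 0, 0;
         0, 0, -2, 0, 0, 0;
         -3/2 + 3/2 * Real.cos t ^ 2, a₁, a₂, -(Real.sqrt 3 / 4) * Real.sin t, 0, Real.cos t;
         3/2 * Real.sin t * Real.cos t, a₃, a₄, (Real.sqrt 3 / 4) * Real.cos t, 0, Real.sin t;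
         -(Real.sqrt 3 / 2) * Real.sin t, a₅, a₆, 3/4, 0, 0]) = 6 * Real.sin t := by
    have hsc : Real.sin t ^ 2 + Real.cos t ^ 2 = 1 := Real.sin_sq_add_cos_sq t
    simp [Matrix.det_succ_row_zero, Fin.sum_univ_succ, Fin.succAbove, Fin.castSucc,
      Fin.castAdd, Fin.castLE]
    ring_nf
    rw [Real.sq_sqrt (by norm_num : (3:ℝ) ≥ 0)]
    linear_combination (3/2 * Real.sin t) * hsc
  rw [hd, abs_mul]
  norm_num
end
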